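/- For any temperature β > 0 and any index y, the ℓ2 norm of the gradient of the softmax function x ↦ softmax(x/β)_y is at most 1/(2√2 β). -/

import Mathlib

open Real

set_option maxHeartbeats 1000000

/-- `softmax(x)_y = exp(x_y) / Σ_i exp(x_i)`. -/
noncomputable def softmax {K : ℕ} (x : EuclideanSpace ℝ (Fin K)) (y : Fin K) : ℝ :=
  Real.exp (x y) / ∑ i, Real.exp (x i)

/-- For any temperature `β > 0` and any index `y`, the ℓ2 norm of the gradient of
`x ↦ softmax(x/β)_y` is at most `1/(2√2 β)`. -/
theorem softmax_gradient_norm_le {K : ℕ} (β : ℝ) (hβ : 0 < β) (y : Fin K)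
    (x : EuclideanSpace ℝ (Fin K)) :
    ‖gradient (fun z => softmax (β⁻¹ • z) y) x‖ ≤ 1 / (2 * Real.sqrt 2 * β) := by
  classical
  set S : ℝ := ∑ i, Real.exp (β⁻¹ * x i) with hS
  have hSpos : 0 < S := Finset.sum_pos (fun i _ => Real.exp_pos _) ⟨y, Finset.mem_univ y⟩
  set s : Fin K → ℝ := fun i => Real.exp (β⁻¹ * x i) / S with hs
  set g : EuclideanSpace ℝ (Fin K) :=
    WithLp.toLp 2 (fun i => β⁻¹ * s y * ((if i = y then 1 else 0) - s i) : Fin K → ℝ) with hg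
  have hsdef : ∀ i, s i = Real.exp (β⁻¹ * x i) / S := fun _ => rfl
  have hgdef : ∀ i, g i = β⁻¹ * s y * ((if i = y then 1 else 0) - s i) := fun _ => rfl
  have hse : ∀ i, s i * S = Real.exp (β⁻¹ * x i) := fun i => div_mul_cancel₀ _ hSpos.ne'
  -- derivatives of the pieces
  have hE : ∀ i : Fin K, HasFDerivAt (fun z : EuclideanSpace ℝ (Fin K) => Real.exp (β⁻¹ * z i))
      (Real.exp (β⁻¹ * x i) • (β⁻¹ • (EuclideanSpace.proj i : EuclideanSpace ℝ (Fin K) →L[ℝ] ℝ))) x := by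
    intro i
    have h1 : HasFDerivAt (fun z : EuclideanSpace ℝ (Fin K) => β⁻¹ * z i)
        (β⁻¹ • (EuclideanSpace.proj i : EuclideanSpace ℝ (Fin K) →L[ℝ] ℝ)) x :=
      (β⁻¹ • (EuclideanSpace.proj i : EuclideanSpace ℝ (Fin K) →L[ℝ] ℝ)).hasFDerivAt
    exact (Real.hasDerivAt_exp _).comp_hasFDerivAt x h1
  have hD : HasFDerivAt (fun z : EuclideanSpace ℝ (Fin K) => ∑ i, Real.exp (β⁻¹ * z i))
      (∑ i, Real.exp (β⁻¹ * x i) • (β⁻¹ • (EuclideanSpace.proj i : EuclideanSpace ℝ (Fin K) →L[ℝ] ℝ))) x :=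
    HasFDerivAt.fun_sum (fun i _ => hE i)
  have hInv : HasFDerivAt (fun z : EuclideanSpace ℝ (Fin K) => (∑ i, Real.exp (β⁻¹ * z i))⁻¹)
      ((-(S^2)⁻¹) • (∑ i, Real.exp (β⁻¹ * x i) • (β⁻¹ • (EuclideanSpace.proj i : EuclideanSpace ℝ (Fin K) →L[ℝ] ℝ)))) x :=
    (hasDerivAt_inv hSpos.ne').comp_hasFDerivAt x hD
  have hMul := (hE y).mul hInv
  have hEq : Real.exp (β⁻¹ * x y) • ((-(S^2)⁻¹) • (∑ i, Real.exp (β⁻¹ * x i) • (β⁻¹ • (EuclideanSpace.proj i : EuclideanSpace ℝ (Fin K) →L[ℝ] ℝ))))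
      + (∑ i, Real.exp (β⁻¹ * x i))⁻¹ • (Real.exp (β⁻¹ * x y) • (β⁻¹ • (EuclideanSpace.proj y : EuclideanSpace ℝ (Fin K) →L[ℝ] ℝ)))
      = (InnerProductSpace.toDual ℝ (EuclideanSpace ℝ (Fin K))) g := by
    apply ContinuousLinearMap.ext
    intro v
    simp only [InnerProductSpace.toDual_apply_apply, PiLp.inner_apply, RCLike.inner_apply,
      conj_trivial, ContinuousLinearMap.add_apply, ContinuousLinearMap.smul_apply,
      ContinuousLinearMap.coe_sum', Finset.sum_apply, PiLp.proj_apply, smul_eq_mul]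
    rw [← hS]
    have hR : ∑ i, Real.exp (β⁻¹ * x i) * (β⁻¹ * v i) = S * β⁻¹ * ∑ i, s i * v i := by
      rw [Finset.mul_sum]
      refine Finset.sum_congr rfl fun i _ => ?_
      rw [← hse i]; ring
    have hL : ∑ i, g i * v i = β⁻¹ * s y * v y - β⁻¹ * s y * ∑ i, s i * v i := by
      have h0 : ∀ i, g i * v i
          = (if i = y then β⁻¹ * s y * v y else 0) - β⁻¹ * s y * (s i * v i) := by
        intro i
        rw [hgdef i]
        by_cases h : i = y
        · rw [if_pos h, if_pos h, h]; ring
        · rw [if_neg h, if_neg h]; ring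
      rw [Finset.sum_congr rfl fun i _ => h0 i, Finset.sum_sub_distrib,
        Finset.sum_ite_eq' Finset.univ y, ← Finset.mul_sum]
      simp
    rw [hR, show ∑ i, v i * g i = ∑ i, g i * v i from Finset.sum_congr rfl fun i _ => mul_comm _ _, hL, ← hse y]
    field_simp
    ring
  have hgrad : HasGradientAt (fun z => softmax (β⁻¹ • z) y) g x := by
    rw [hasGradientAt_iff_hasFDerivAt]
    have hfun : (fun z : EuclideanSpace ℝ (Fin K) => softmax (β⁻¹ • z) y)
        = fun z => Real.exp (β⁻¹ * z y) * (∑ i, Real.exp (β⁻¹ * z i))⁻¹ := by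
      funext z
      simp [softmax, div_eq_mul_inv]
    rw [hfun]
    exact hMul.congr_fderiv hEq
  rw [hgrad.gradient]
  -- norm bound
  have hs_nonneg : ∀ i, 0 ≤ s i := fun i => div_nonneg (Real.exp_pos _).le hSpos.le
  have hs_sum : ∑ i, s i = 1 := by
    rw [Finset.sum_congr rfl fun i _ => hsdef i, ← Finset.sum_div, ← hS,
      div_self hSpos.ne']
  have hsy_le : s y ≤ 1 := by
    rw [← hs_sum]
    exact Finset.single_le_sum (fun i _ => hs_nonneg i) (Finset.mem_univ y)
  have herase : ∑ i ∈ Finset.univ.erase y, s i = 1 - s y := by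
    have h := Finset.sum_erase_add Finset.univ s (Finset.mem_univ y)
    linarith [hs_sum, h]
  have hsq : ∑ i ∈ Finset.univ.erase y, (s i)^2 ≤ (1 - s y)^2 := by
    rw [← herase]
    exact Finset.sum_sq_le_sq_sum_of_nonneg (fun i _ => hs_nonneg i)
  have hnorm : ‖g‖ = Real.sqrt (∑ i, (g i)^2) := by
    rw [EuclideanSpace.norm_eq]
    congr 1
    exact Finset.sum_congr rfl (fun i _ => by rw [Real.norm_eq_abs, sq_abs])
  rw [hnorm]
  have hsum : ∑ i, (g i)^2 ≤ (1 / (2 * Real.sqrt 2 * β))^2 := by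
    have hsplit : ∑ i, (g i)^2
        = (β⁻¹ * s y)^2 * ((1 - s y)^2 + ∑ i ∈ Finset.univ.erase y, (s i)^2) := by
      rw [← Finset.sum_erase_add _ _ (Finset.mem_univ y)]
      have h1 : ∀ i ∈ Finset.univ.erase y, (g i)^2 = (β⁻¹ * s y)^2 * (s i)^2 := by
        intro i hi
        have hne : i ≠ y := (Finset.mem_erase.mp hi).1
        rw [hgdef i, if_neg hne]
        ring
      rw [Finset.sum_congr rfl h1]
      have h2 : (g y)^2 = (β⁻¹ * s y)^2 * (1 - s y)^2 := by
        rw [hgdef y, if_pos rfl]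
        ring
      rw [h2, ← Finset.mul_sum]
      ring
    rw [hsplit]
    have hsqrt2 : Real.sqrt 2 ^ 2 = 2 := Real.sq_sqrt (by norm_num)
    have h2 : (1 / (2 * Real.sqrt 2 * β))^2 = 1 / (8 * β^2) := by
      rw [div_pow, one_pow, mul_pow, mul_pow, hsqrt2]
      norm_num
    rw [h2]
    have hab : s y * (1 - s y) ≤ 1/4 := by nlinarith [sq_nonneg (s y - 1/2)]
    have hab0 : 0 ≤ s y * (1 - s y) := mul_nonneg (hs_nonneg y) (by linarith)
    have hb : (β⁻¹ * s y)^2 * ((1 - s y)^2 + ∑ i ∈ Finset.univ.erase y, (s i)^2)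
        ≤ (β⁻¹)^2 * (2 * (s y * (1 - s y))^2) := by
      nlinarith [sq_nonneg β⁻¹, sq_nonneg (s y), hs_nonneg y]
    have hc : (β⁻¹)^2 * (2 * (s y * (1 - s y))^2) ≤ 1 / (8 * β^2) := by
      have h3 : (s y * (1 - s y))^2 ≤ (1/4:ℝ)^2 := by nlinarith
      have h4 : (β⁻¹)^2 * (2 * (1/4:ℝ)^2) = 1 / (8 * β^2) := by
        field_simp
        ring
      nlinarith [sq_nonneg β⁻¹]
    linarith
  calc Real.sqrt (∑ i, (g i)^2) ≤ Real.sqrt ((1 / (2 * Real.sqrt 2 * β))^2) :=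
        Real.sqrt_le_sqrt hsum
    _ = 1 / (2 * Real.sqrt 2 * β) := Real.sqrt_sq (by positivity)
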